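/- Let F = [[0, Aᵀ],[A, ×(-iA)]] for A ∈ ℂ³ and let λ be a complex number with λ² = A·A (bilinear dot product). Then exp(F) = cosh(λ)·I + (sinh(λ)/λ)·F, where sinh(λ)/λ is interpreted as 1 when λ = 0. -/

import Mathlib

open Matrix

noncomputable def Fmat (A : Fin 3 → ℂ) : Matrix (Fin 4) (Fin 4) ℂ :=
  !![0, A 0, A 1, A 2;
     A 0, 0, -Complex.I * A 2, Complex.I * A 1;
     A 1, Complex.I * A 2, 0, -Complex.I * A 0;
     A 2, -Complex.I * A 1, Complex.I * A 0, 0]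

noncomputable def cdot (A B : Fin 3 → ℂ) : ℂ := A 0 * B 0 + A 1 * B 1 + A 2 * B 2

set_option maxHeartbeats 1000000 in
lemma Fmat_sq (A : Fin 3 → ℂ) : Fmat A ^ 2 = cdot A A • (1 : Matrix (Fin 4) (Fin 4) ℂ) := by
  rw [pow_two]
  ext i j
  fin_cases i <;> fin_cases j <;>
    simp [Fmat, cdot, Matrix.mul_apply, Fin.sum_univ_four, Matrix.one_apply] <;>
    ring_nf <;>
    simp [Complex.I_sq] <;> ring

lemma summable_aux (l : ℂ) :
    Summable fun n : ℕ => l ^ (2 * n) / ((2 * n + 1).factorial : ℂ) := by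
  have hs : Summable fun n : ℕ => ‖l‖ ^ (2 * n) / ((2 * n).factorial : ℝ) :=
    (Real.hasSum_cosh ‖l‖).summable
  apply Summable.of_norm_bounded hs
  intro n
  rw [norm_div, norm_pow, Complex.norm_natCast]
  gcongr
  omega

/-- exp F = cosh(λ) I + (sinh λ / λ) F where λ² = A·A and sinh λ / λ is
the entire function ∑ λ^(2n)/(2n+1)!. -/
theorem stmt_8 (A : Fin 3 → ℂ) (l : ℂ) (hl : l ^ 2 = cdot A A) :
    NormedSpace.exp (Fmat A) =
      Complex.cosh l • (1 : Matrix (Fin 4) (Fin 4) ℂ) +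
        (∑' n : ℕ, l ^ (2 * n) / ((2 * n + 1).factorial : ℂ)) • Fmat A := by
  have hF2 : Fmat A ^ 2 = l ^ 2 • (1 : Matrix (Fin 4) (Fin 4) ℂ) := by
    rw [hl, Fmat_sq]
  rw [NormedSpace.exp_eq_tsum ℂ]
  refine HasSum.tsum_eq ?_
  refine HasSum.even_add_odd ?_ ?_
  · have h := (Complex.hasSum_cosh l).smul_const (1 : Matrix (Fin 4) (Fin 4) ℂ)
    convert h using 2 with n
    case e'_3 => rfl
    rw [pow_mul, hF2, smul_pow, one_pow, smul_smul, ← pow_mul]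
    congr 1
    ring
  · have h := (summable_aux l).hasSum.smul_const (Fmat A)
    convert h using 2 with n
    case e'_3 => rfl
    rw [pow_succ, pow_mul, hF2, smul_pow, one_pow, smul_mul_assoc, one_mul,
      smul_smul, ← pow_mul]
    congr 1
    ring
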